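/- Let n ≥ 1 and work in ℝⁿ with the canonical Euclidean norm ‖·‖₂, with closed unit ball 𝔹ⁿ and unit sphere 𝕊ⁿ⁻¹. Let K ⊆ 𝔹ⁿ be a compact convex set, symmetric with respect to the origin (K = −K), with nonempty interior, containing n linearly independent vectors lying on 𝕊ⁿ⁻¹, and with K ≠ 𝔹ⁿ. Then there exist u, v ∈ 𝕊ⁿ⁻¹ ∩ K, not colinear, such that (u + v)/‖u + v‖₂ ∉ K. -/

import Mathlib

set_option maxHeartbeats 1000000

open Metric

/-- A closed subset of ℝ containing 0 and 1 and closed under "strict betweenness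
insertion" contains all of [0,1]. -/
lemma gap_lemma_aux (A : Set ℝ) (hA : IsClosed A) (h0 : (0:ℝ) ∈ A) (h1 : (1:ℝ) ∈ A)
    (hmid : ∀ a ∈ A, ∀ b ∈ A, a < b → ∃ c ∈ A, a < c ∧ c < b) :
    Set.Icc (0:ℝ) 1 ⊆ A := by
  intro x hx
  by_contra hxA
  have hSne : (A ∩ Set.Iic x).Nonempty := ⟨0, h0, hx.1⟩
  have hSbdd : BddAbove (A ∩ Set.Iic x) := ⟨x, fun y hy => hy.2⟩
  have haA : sSup (A ∩ Set.Iic x) ∈ A ∩ Set.Iic x :=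
    (hA.inter isClosed_Iic).csSup_mem hSne hSbdd
  have hTne : (A ∩ Set.Ici x).Nonempty := ⟨1, h1, hx.2⟩
  have hTbdd : BddBelow (A ∩ Set.Ici x) := ⟨x, fun y hy => hy.2⟩
  have hbA : sInf (A ∩ Set.Ici x) ∈ A ∩ Set.Ici x :=
    (hA.inter isClosed_Ici).csInf_mem hTne hTbdd
  have hax : sSup (A ∩ Set.Iic x) < x :=
    lt_of_le_of_ne haA.2 (fun h => hxA (h ▸ haA.1))
  have hxb : x < sInf (A ∩ Set.Ici x) :=
    lt_of_le_of_ne hbA.2 (fun h => hxA (h.symm ▸ hbA.1))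
  obtain ⟨c, hcA, hac, hcb⟩ := hmid _ haA.1 _ hbA.1 (hax.trans hxb)
  rcases le_or_gt c x with h | h
  · exact absurd (le_csSup hSbdd ⟨hcA, h⟩) (not_le.mpr hac)
  · exact absurd (csInf_le hTbdd ⟨hcA, h.le⟩) (not_le.mpr hcb)

/-- Two unit vectors that are not equal nor opposite are linearly independent
(coefficient form). -/
lemma unit_indep_aux {n : ℕ} {y z : EuclideanSpace ℝ (Fin n)}
    (hy1 : ‖y‖ = 1) (hz1 : ‖z‖ = 1) (hne : y ≠ z) (hne' : y ≠ -z)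
    {a b : ℝ} (hab : a • y + b • z = 0) : a = 0 ∧ b = 0 := by
  by_cases ha : a = 0
  · subst ha
    rw [zero_smul, zero_add] at hab
    rcases smul_eq_zero.mp hab with hb | hz0
    · exact ⟨rfl, hb⟩
    · rw [hz0, norm_zero] at hz1; norm_num at hz1
  · exfalso
    have h2 : a • y = (-b) • z := by linear_combination (norm := module) hab
    have hy' : y = (a⁻¹ * -b) • z := by
      rw [← smul_smul, ← h2, smul_smul, inv_mul_cancel₀ ha, one_smul]
    have habs : |a⁻¹ * -b| = 1 := by
      have h3 := hy1
      rw [hy', norm_smul, Real.norm_eq_abs, hz1, mul_one] at h3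
      exact h3
    rcases abs_eq (by norm_num : (0:ℝ) ≤ 1) |>.mp habs with h | h
    · rw [h, one_smul] at hy'; exact hne hy'
    · rw [h, neg_one_smul] at hy'; exact hne' hy'

lemma normalize_smul_pos {n : ℕ} {c : ℝ} (hc : 0 < c) (x : EuclideanSpace ℝ (Fin n)) :
    ‖c • x‖⁻¹ • (c • x) = ‖x‖⁻¹ • x := by
  by_cases hx : x = 0
  · simp [hx]
  · rw [norm_smul, Real.norm_eq_abs, abs_of_pos hc, smul_smul]
    congr 1
    have hxn : ‖x‖ ≠ 0 := norm_ne_zero_iff.mpr hx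
    field_simp

/-- Arc lemma: under the contradiction hypothesis, the minor arc between two
unit vectors of K lies in K. -/
lemma arc_lemma {n : ℕ} {K : Set (EuclideanSpace ℝ (Fin n))}
    (hKclosed : IsClosed K)
    (h : ∀ u v : EuclideanSpace ℝ (Fin n), u ∈ K → v ∈ K → ‖u‖ = 1 → ‖v‖ = 1 →
      (¬∃ c : ℝ, u = c • v ∨ v = c • u) → ‖u + v‖⁻¹ • (u + v) ∈ K)
    {y z : EuclideanSpace ℝ (Fin n)} (hy : y ∈ K) (hz : z ∈ K)
    (hy1 : ‖y‖ = 1) (hz1 : ‖z‖ = 1) (hne : y ≠ z) (hne' : y ≠ -z)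
    {s t : ℝ} (hs : 0 ≤ s) (ht : 0 ≤ t) (hst : ‖s • y + t • z‖ = 1) :
    s • y + t • z ∈ K := by
  have hind : ∀ a b : ℝ, a • y + b • z = 0 → a = 0 ∧ b = 0 :=
    fun a b hab => unit_indep_aux hy1 hz1 hne hne' hab
  set q : ℝ → EuclideanSpace ℝ (Fin n) := fun l => (1 - l) • y + l • z with hq
  have hqnorm : ∀ l, 0 < ‖q l‖ := by
    intro l
    rw [norm_pos_iff]
    intro h0
    obtain ⟨h1, h2⟩ := hind _ _ h0
    rw [h2] at h1; norm_num at h1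
  set p : ℝ → EuclideanSpace ℝ (Fin n) := fun l => ‖q l‖⁻¹ • q l with hp
  have hpnorm : ∀ l, ‖p l‖ = 1 := by
    intro l
    rw [hp]
    simp only
    rw [norm_smul, norm_inv, norm_norm, inv_mul_cancel₀ (hqnorm l).ne']
  have hqc : Continuous q := by fun_prop
  have hpc : Continuous p := ((hqc.norm).inv₀ (fun l => (hqnorm l).ne')).smul hqc
  -- non-colinearity of distinct points on the arc
  have claim : ∀ a b : ℝ, a ∈ Set.Icc (0:ℝ) 1 → b ∈ Set.Icc (0:ℝ) 1 → a ≠ b →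
      ∀ c : ℝ, p a ≠ c • p b := by
    intro a b ha hb hab c hc
    have hα : (0:ℝ) < ‖q a‖⁻¹ := inv_pos.mpr (hqnorm a)
    have hβ : (0:ℝ) < ‖q b‖⁻¹ := inv_pos.mpr (hqnorm b)
    set α := ‖q a‖⁻¹ with hαd
    set β := ‖q b‖⁻¹ with hβd
    have habs : |c| = 1 := by
      have h1 := hpnorm a
      rw [hc, norm_smul, Real.norm_eq_abs, hpnorm b, mul_one] at h1
      exact h1
    have hexp : (α*(1-a) - c*(β*(1-b))) • y + (α*a - c*(β*b)) • z = p a - c • p b := by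
      simp only [hp, hq]
      module
    obtain ⟨hA, hB⟩ := hind _ _ (hexp.trans (sub_eq_zero_of_eq hc))
    rcases abs_eq (by norm_num : (0:ℝ) ≤ 1) |>.mp habs with rfl | rfl
    · -- c = 1 : equal points force a = b
      have hαβ : α = β := by linarith
      have hBb : α * a = β * b := by linarith
      rw [← hαβ] at hBb
      exact hab (mul_left_cancel₀ hα.ne' hBb)
    · -- c = -1 : antipodal points impossible on [0,1]
      have hn1 : (0:ℝ) ≤ α * (1-a) := mul_nonneg hα.le (by linarith [ha.2])
      have hn2 : (0:ℝ) ≤ β * (1-b) := mul_nonneg hβ.le (by linarith [hb.2])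
      have hn3 : (0:ℝ) ≤ α * a := mul_nonneg hα.le ha.1
      have hn4 : (0:ℝ) ≤ β * b := mul_nonneg hβ.le hb.1
      have h1 : α * (1-a) = 0 := by linarith
      have h2 : α * a = 0 := by linarith
      have ha1 : a = 1 := by
        have := mul_eq_zero.mp h1
        rcases this with h | h
        · exact absurd h hα.ne'
        · linarith
      have ha0 : a = 0 := by
        rcases mul_eq_zero.mp h2 with h | h
        · exact absurd h hα.ne'
        · exact h
      rw [ha0] at ha1; norm_num at ha1
  -- the parameter set
  set A : Set ℝ := Set.Icc (0:ℝ) 1 ∩ p ⁻¹' K with hA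
  have hAclosed : IsClosed A := isClosed_Icc.inter (hKclosed.preimage hpc)
  have hp0 : p 0 = y := by
    simp only [hp, hq]
    norm_num [hy1]
  have hp1 : p 1 = z := by
    simp only [hp, hq]
    norm_num [hz1]
  have h0A : (0:ℝ) ∈ A := ⟨by norm_num, by simp only [Set.mem_preimage]; rw [hp0]; exact hy⟩
  have h1A : (1:ℝ) ∈ A := ⟨by norm_num, by simp only [Set.mem_preimage]; rw [hp1]; exact hz⟩
  have hmid : ∀ a ∈ A, ∀ b ∈ A, a < b → ∃ c ∈ A, a < c ∧ c < b := by
    intro l hl m hm hlm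
    have hα : (0:ℝ) < ‖q l‖⁻¹ := inv_pos.mpr (hqnorm l)
    have hβ : (0:ℝ) < ‖q m‖⁻¹ := inv_pos.mpr (hqnorm m)
    set α := ‖q l‖⁻¹
    set β := ‖q m‖⁻¹
    set Y : ℝ := α*(1-l) + β*(1-m) with hY
    set W : ℝ := α*l + β*m with hW
    have hσ : Y + W = α + β := by rw [hY, hW]; ring
    have hσpos : (0:ℝ) < Y + W := by rw [hσ]; positivity
    set ν : ℝ := W / (Y + W) with hν
    have hν1 : (Y + W) * ν = W := by rw [hν]; field_simp [hσpos.ne']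
    have hν2 : (Y + W) * (1 - ν) = Y := by linear_combination -hν1
    have hsum : p l + p m = (Y + W) • q ν := by
      have : (Y + W) • q ν = ((Y+W)*(1-ν)) • y + ((Y+W)*ν) • z := by
        simp only [hq]; module
      rw [this, hν1, hν2]
      simp only [hp, hq, hY, hW]
      module
    have hncol : ¬∃ c : ℝ, p l = c • p m ∨ p m = c • p l := by
      rintro ⟨c, hc | hc⟩
      · exact claim l m hl.1 hm.1 hlm.ne c hc
      · exact claim m l hm.1 hl.1 hlm.ne' c hc
    have hmem := h (p l) (p m) hl.2 hm.2 (hpnorm l) (hpnorm m) hncol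
    have hpν : p ν ∈ K := by
      have heq : ‖p l + p m‖⁻¹ • (p l + p m) = p ν := by
        rw [hsum, normalize_smul_pos hσpos]
      rwa [heq] at hmem
    have hWnn : (0:ℝ) ≤ W := by
      rw [hW]
      exact add_nonneg (mul_nonneg hα.le hl.1.1) (mul_nonneg hβ.le hm.1.1)
    refine ⟨ν, ⟨⟨?_, ?_⟩, hpν⟩, ?_, ?_⟩
    · rw [hν]; exact div_nonneg hWnn hσpos.le
    · rw [hν, div_le_one hσpos, hσ, hW]
      nlinarith [hl.1.1, hl.1.2, hm.1.1, hm.1.2]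
    · rw [hν, lt_div_iff₀ hσpos, hσ]
      nlinarith [mul_pos hβ (sub_pos.mpr hlm)]
    · rw [hν, div_lt_iff₀ hσpos, hσ]
      nlinarith [mul_pos hα (sub_pos.mpr hlm)]
  have hIcc := gap_lemma_aux A hAclosed h0A h1A hmid
  -- finish: the given point is p (t/(s+t))
  have hst0 : 0 < s + t := by
    rcases (lt_or_eq_of_le (by linarith : (0:ℝ) ≤ s + t)) with h | h
    · exact h
    · exfalso
      have hs0 : s = 0 := by linarith
      have ht0 : t = 0 := by linarith
      rw [hs0, ht0] at hst
      simp at hst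
  have hν0 : t / (s + t) ∈ Set.Icc (0:ℝ) 1 := by
    constructor
    · positivity
    · rw [div_le_one hst0]; linarith
  have hqeq : q (t/(s+t)) = (s+t)⁻¹ • (s • y + t • z) := by
    simp only [hq]
    have h1 : 1 - t/(s+t) = s/(s+t) := by field_simp; ring
    rw [h1]
    rw [smul_add, smul_smul, smul_smul]
    congr 2 <;> field_simp <;> ring
  have hfin : p (t/(s+t)) = s • y + t • z := by
    simp only [hp]
    rw [hqeq, normalize_smul_pos (inv_pos.mpr hst0), hst]
    simp
  have := (hIcc hν0).2
  rw [Set.mem_preimage, hfin] at this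
  exact this

/-- Two–dimensional span lemma: all unit vectors in the span of two
non-colinear unit vectors of K lie in K. -/
lemma span2_lemma {n : ℕ} {K : Set (EuclideanSpace ℝ (Fin n))}
    (hKclosed : IsClosed K) (hKsymm : K = -K)
    (h : ∀ u v : EuclideanSpace ℝ (Fin n), u ∈ K → v ∈ K → ‖u‖ = 1 → ‖v‖ = 1 →
      (¬∃ c : ℝ, u = c • v ∨ v = c • u) → ‖u + v‖⁻¹ • (u + v) ∈ K)
    {y z : EuclideanSpace ℝ (Fin n)} (hy : y ∈ K) (hz : z ∈ K)
    (hy1 : ‖y‖ = 1) (hz1 : ‖z‖ = 1) (hne : y ≠ z) (hne' : y ≠ -z)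
    {a b : ℝ} (hab : ‖a • y + b • z‖ = 1) : a • y + b • z ∈ K := by
  have hnegmem : ∀ x : EuclideanSpace ℝ (Fin n), x ∈ K → -x ∈ K := by
    intro x hx
    rw [hKsymm]
    exact Set.neg_mem_neg.mpr hx
  rcases le_or_gt 0 a with ha | ha <;> rcases le_or_gt 0 b with hb | hb
  · exact arc_lemma hKclosed h hy hz hy1 hz1 hne hne' ha hb hab
  · have heq : a • y + b • z = a • y + (-b) • (-z) := by module
    rw [heq] at hab ⊢
    exact arc_lemma hKclosed h hy (hnegmem z hz) hy1 (by rw [norm_neg]; exact hz1)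
      hne' (by rw [neg_neg]; exact hne) ha (by linarith) hab
  · have heq : a • y + b • z = (-a) • (-y) + b • z := by module
    rw [heq] at hab ⊢
    exact arc_lemma hKclosed h (hnegmem y hy) hz (by rw [norm_neg]; exact hy1) hz1
      (fun hcon => hne' (by rw [← neg_neg y, hcon])) (fun hcon => hne (by rw [← neg_neg y, hcon, neg_neg]))
      (by linarith) hb hab
  · have heq : a • y + b • z = (-a) • (-y) + (-b) • (-z) := by module
    rw [heq] at hab ⊢
    exact arc_lemma hKclosed h (hnegmem y hy) (hnegmem z hz)
      (by rw [norm_neg]; exact hy1) (by rw [norm_neg]; exact hz1)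
      (fun hcon => hne (neg_injective hcon)) (fun hcon => hne' (by rw [← neg_neg y, hcon, neg_neg]))
      (by linarith) (by linarith) hab

theorem exists_noncolinear_unit_vectors_midpoint_escapes
    (n : ℕ) (hn : 1 ≤ n) (K : Set (EuclideanSpace ℝ (Fin n)))
    (hKcompact : IsCompact K) (hKconvex : Convex ℝ K) (hKsymm : K = -K)
    (hKint : (interior K).Nonempty)
    (hKsub : K ⊆ closedBall (0 : EuclideanSpace ℝ (Fin n)) 1)
    (hKindep : ∃ w : Fin n → EuclideanSpace ℝ (Fin n),
      LinearIndependent ℝ w ∧ ∀ i, w i ∈ K ∧ ‖w i‖ = 1)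
    (hKne : K ≠ closedBall (0 : EuclideanSpace ℝ (Fin n)) 1) :
    ∃ u v : EuclideanSpace ℝ (Fin n), u ∈ K ∧ v ∈ K ∧ ‖u‖ = 1 ∧ ‖v‖ = 1 ∧
      ¬ (∃ c : ℝ, u = c • v ∨ v = c • u) ∧ ‖u + v‖⁻¹ • (u + v) ∉ K := by
  by_contra hcon0
  push_neg at hcon0
  have hcon : ∀ u v : EuclideanSpace ℝ (Fin n), u ∈ K → v ∈ K → ‖u‖ = 1 → ‖v‖ = 1 →
      (¬∃ c : ℝ, u = c • v ∨ v = c • u) → ‖u + v‖⁻¹ • (u + v) ∈ K := by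
    intro u v h1 h2 h3 h4 h5
    apply hcon0 u v h1 h2 h3 h4
    intro c
    exact ⟨fun hc => h5 ⟨c, Or.inl hc⟩, fun hc => h5 ⟨c, Or.inr hc⟩⟩
  obtain ⟨w, hw, hwK⟩ := hKindep
  have hKclosed : IsClosed K := hKcompact.isClosed
  have hnegmem : ∀ x : EuclideanSpace ℝ (Fin n), x ∈ K → -x ∈ K := by
    intro x hx
    rw [hKsymm]
    exact Set.neg_mem_neg.mpr hx
  have key : ∀ k : ℕ, ∀ x : EuclideanSpace ℝ (Fin n),
      x ∈ Submodule.span ℝ (w '' {i : Fin n | (i:ℕ) < k}) → ‖x‖ = 1 → x ∈ K := by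
    intro k
    induction k with
    | zero =>
      intro x hx hx1
      have : {i : Fin n | (i:ℕ) < 0} = ∅ := by ext i; simp
      rw [this, Set.image_empty, Submodule.span_empty, Submodule.mem_bot] at hx
      rw [hx, norm_zero] at hx1
      norm_num at hx1
    | succ k ih =>
      intro x hx hx1
      by_cases hk : k < n
      · have hset : {i : Fin n | (i:ℕ) < k+1} = insert (⟨k, hk⟩ : Fin n) {i : Fin n | (i:ℕ) < k} := by
          ext i
          simp [Nat.lt_succ_iff_lt_or_eq, Fin.ext_iff, or_comm]; omega
        rw [hset, Set.image_insert_eq, Submodule.mem_span_insert] at hx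
        obtain ⟨c, v, hv, rfl⟩ := hx
        set z := w ⟨k, hk⟩ with hzd
        have hzK : z ∈ K := (hwK ⟨k, hk⟩).1
        have hz1 : ‖z‖ = 1 := (hwK ⟨k, hk⟩).2
        have hznot : z ∉ Submodule.span ℝ (w '' {i : Fin n | (i:ℕ) < k}) :=
          hw.notMem_span_image (by simp)
        by_cases hv0 : v = 0
        · subst hv0
          rw [add_zero] at hx1 ⊢
          rw [norm_smul, Real.norm_eq_abs, hz1, mul_one] at hx1
          rcases abs_eq (by norm_num : (0:ℝ) ≤ 1) |>.mp hx1 with rfl | rfl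
          · rw [one_smul]; exact hzK
          · rw [neg_one_smul]; exact hnegmem z hzK
        · by_cases hc0 : c = 0
          · subst hc0
            rw [zero_smul, zero_add] at hx1 ⊢
            exact ih v hv hx1
          · have hvn : (0:ℝ) < ‖v‖ := norm_pos_iff.mpr hv0
            set y := ‖v‖⁻¹ • v with hyd
            have hy1 : ‖y‖ = 1 := by
              rw [hyd, norm_smul, norm_inv, norm_norm, inv_mul_cancel₀ hvn.ne']
            have hyspan : y ∈ Submodule.span ℝ (w '' {i : Fin n | (i:ℕ) < k}) :=
              Submodule.smul_mem _ _ hv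
            have hyK : y ∈ K := ih y hyspan hy1
            have hyz : y ≠ z := by
              intro hcon'
              exact hznot (hcon' ▸ hyspan)
            have hyz' : y ≠ -z := by
              intro hcon'
              apply hznot
              have : z = -y := by rw [hcon', neg_neg]
              rw [this]
              exact Submodule.neg_mem _ hyspan
            have hexp : c • z + v = ‖v‖ • y + c • z := by
              rw [hyd, smul_smul, mul_inv_cancel₀ hvn.ne', one_smul]
              abel
            rw [hexp] at hx1 ⊢
            exact span2_lemma hKclosed hKsymm hcon hyK hzK hy1 hz1 hyz hyz' hx1
      · have hset : {i : Fin n | (i:ℕ) < k+1} = {i : Fin n | (i:ℕ) < k} := by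
          ext i
          have := i.isLt
          simp only [Set.mem_setOf_eq]
          omega
        rw [hset] at hx
        exact ih x hx hx1
  have hsphere : ∀ x : EuclideanSpace ℝ (Fin n), ‖x‖ = 1 → x ∈ K := by
    intro x hx
    apply key n x _ hx
    have huniv : {i : Fin n | (i:ℕ) < n} = Set.univ := by
      ext i; simp [i.isLt]
    rw [huniv, Set.image_univ]
    haveI : Nonempty (Fin n) := ⟨⟨0, hn⟩⟩
    rw [hw.span_eq_top_of_card_eq_finrank (by simp [finrank_euclideanSpace_fin])]
    exact Submodule.mem_top
  have h0K : (0 : EuclideanSpace ℝ (Fin n)) ∈ K := by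
    have huK := (hwK ⟨0, hn⟩).1
    have hmem := hKconvex huK (hnegmem _ huK) (by norm_num : (0:ℝ) ≤ 1/2)
      (by norm_num : (0:ℝ) ≤ 1/2) (by norm_num)
    have : (1/2 : ℝ) • w ⟨0, hn⟩ + (1/2 : ℝ) • (-(w ⟨0, hn⟩)) = 0 := by module
    rwa [this] at hmem
  apply hKne
  apply Set.Subset.antisymm hKsub
  intro x hx
  rcases eq_or_ne x 0 with rfl | hx0
  · exact h0K
  · have hxn : (0:ℝ) < ‖x‖ := norm_pos_iff.mpr hx0
    have hxle : ‖x‖ ≤ 1 := mem_closedBall_zero_iff.mp hx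
    have hux : ‖x‖⁻¹ • x ∈ K := by
      apply hsphere
      rw [norm_smul, norm_inv, norm_norm, inv_mul_cancel₀ hxn.ne']
    have hmem := hKconvex hux h0K (norm_nonneg x) (by linarith : (0:ℝ) ≤ 1 - ‖x‖)
      (by ring : ‖x‖ + (1 - ‖x‖) = 1)
    have heq : ‖x‖ • (‖x‖⁻¹ • x) + (1 - ‖x‖) • (0 : EuclideanSpace ℝ (Fin n)) = x := by
      rw [smul_smul, mul_inv_cancel₀ hxn.ne', one_smul, smul_zero, add_zero]
    rwa [heq] at hmem
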